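/- Let S be a complete RN module over ℝ with base (Ω, F, P) admitting G(S) (i.e. P(G(S)) > 0), and let u ∈ S with ‖u‖ = I_{G(S)}. Then there exists v ∈ S with ‖v‖ = I_{G(S)} such that u and v are L⁰-independent on G(S). -/

import Mathlib

open MeasureTheory Filter Set

noncomputable section

namespace RNM

variable {Ω : Type*} [MeasurableSpace Ω]

/-- `L⁰(F, ℝ)`: equivalence classes of real random variables mod a.e. equality. -/
abbrev L0 (μ : Measure Ω) : Type _ := Ω →ₘ[μ] ℝ

open Classical in
/-- The equivalence class of the indicator function of a (measurable) set. -/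
noncomputable def ind (μ : Measure Ω) (A : Set Ω) : L0 μ :=
  if h : MeasurableSet A then
    AEEqFun.mk (A.indicator fun _ => (1 : ℝ)) (aestronglyMeasurable_const.indicator h)
  else 0

/-- The constant function, as an element of `L⁰`. -/
noncomputable def cst (μ : Measure Ω) (r : ℝ) : L0 μ := AEEqFun.const Ω r

/-- `A ⊂ B` modulo null sets. -/
def aeSub (μ : Measure Ω) (A B : Set Ω) : Prop := μ (A \ B) = 0

/-- `A = B` modulo null sets. -/
def aeEqS (μ : Measure Ω) (A B : Set Ω) : Prop := μ ((A \ B) ∪ (B \ A)) = 0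

variable {μ : Measure Ω} {S : Type*} [AddCommGroup S]

/-- The axioms of a random normed module over ℝ with base `(Ω, F, μ)`: `S` is a left module
over the algebra `L⁰(F,ℝ)` (with module multiplication `sm`) and `nrm` is an `L⁰`-norm. -/
structure IsRNModule (μ : Measure Ω) (sm : L0 μ → S → S) (nrm : S → L0 μ) : Prop where
  smul_add : ∀ ξ x y, sm ξ (x + y) = sm ξ x + sm ξ y
  add_smul : ∀ ξ η x, sm (ξ + η) x = sm ξ x + sm η x
  mul_smul : ∀ ξ η x, sm (ξ * η) x = sm ξ (sm η x)
  one_smul : ∀ x, sm 1 x = x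
  nrm_nonneg : ∀ x, 0 ≤ nrm x
  nrm_smul : ∀ ξ x, nrm (sm ξ x) = |ξ| * nrm x
  nrm_add : ∀ x y, nrm (x + y) ≤ nrm x + nrm y
  nrm_eq_zero : ∀ x, nrm x = 0 → x = 0

/-- `x` and `y` are `L⁰`-independent on `F`. -/
def Indep (sm : L0 μ → S → S) (x y : S) (F : Set Ω) : Prop :=
  ∀ ξ η : L0 μ, sm (ξ * ind μ F) x + sm (η * ind μ F) y = 0 →
    ξ * ind μ F = 0 ∧ η * ind μ F = 0

/-- `Rank_D(S) ≥ 2`. -/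
def RankGe2 (sm : L0 μ → S → S) (D : Set Ω) : Prop := ∃ x y : S, Indep sm x y D

/-- `A_x = [‖x‖ > 0]`. -/
def Aset (nrm : S → L0 μ) (x : S) : Set Ω := {ω | 0 < (nrm x) ω}

/-- `A_{xy} = A_x ∩ A_y`. -/
def Axy (nrm : S → L0 μ) (x y : S) : Set Ω := Aset nrm x ∩ Aset nrm y

/-- `B_{xy} = A_{xy} ∩ A_{x-y}`. -/
def Bxy (nrm : S → L0 μ) (x y : S) : Set Ω := Axy nrm x y ∩ Aset nrm (x - y)

/-- `H` is (a representative of) the support `H(S) = [⋁{‖x‖ : x ∈ S} > 0]`. -/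
def IsSupport (nrm : S → L0 μ) (H : Set Ω) : Prop :=
  MeasurableSet H ∧ (∀ x : S, aeSub μ (Aset nrm x) H) ∧
    ∀ B : Set Ω, MeasurableSet B → aeSub μ B H → 0 < μ B →
      ∃ x : S, 0 < μ (B ∩ Aset nrm x)

/-- A sequence in `S` is Cauchy for the topology of convergence in probability. -/
def CauchyInProb (μ : Measure Ω) (nrm : S → L0 μ) (u : ℕ → S) : Prop :=
  ∀ ε : ℝ, 0 < ε →
    Tendsto (fun p : ℕ × ℕ => μ {ω | ε ≤ |(nrm (u p.1 - u p.2)) ω|}) atTop (nhds 0)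

/-- `u n → x` in probability (i.e. `‖u n - x‖ → 0` in probability). -/
def TendstoInProb (μ : Measure Ω) (nrm : S → L0 μ) (u : ℕ → S) (x : S) : Prop :=
  ∀ ε : ℝ, 0 < ε →
    Tendsto (fun n => μ {ω | ε ≤ |(nrm (u n - x)) ω|}) atTop (nhds 0)

/-- Completeness of a random normed module. -/
def CompleteRN (μ : Measure Ω) (nrm : S → L0 μ) : Prop :=
  ∀ u : ℕ → S, CauchyInProb μ nrm u → ∃ x : S, TendstoInProb μ nrm u x

/-- The random unit sphere `S(1)`. -/
def sphere (nrm : S → L0 μ) : Set S :=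
  {x | ∃ A : Set Ω, MeasurableSet A ∧ 0 < μ A ∧ nrm x = ind μ A}

/-- The random closed unit ball `U(1)`. -/
def ball (nrm : S → L0 μ) : Set S := {x | nrm x ≤ 1}

/-- `ε` is an admissible random convexity parameter on `D`: `ε ≥ 0` and `0 < ε ≤ 2` on `D`. -/
def Admissible (μ : Measure Ω) (D : Set Ω) (ε : L0 μ) : Prop :=
  0 ≤ ε ∧ ∀ᵐ ω ∂μ, ω ∈ D → 0 < ε ω ∧ ε ω ≤ 2

/-- midpoint `(x+y)/2`. -/
def mid (μ : Measure Ω) (sm : L0 μ → S → S) (x y : S) : S := sm (cst μ (1/2)) (x + y)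

/-- The set whose infimum (in the a.s. order of `L⁰`) is the modulus of random
convexity `δ_D(ε)`. -/
def modSet (μ : Measure Ω) (sm : L0 μ → S → S) (nrm : S → L0 μ) (D : Set Ω) (ε : L0 μ) :
    Set (L0 μ) :=
  {z | ∃ x ∈ sphere nrm, ∃ y ∈ sphere nrm, aeSub μ D (Bxy nrm x y) ∧
    ε * ind μ D ≤ ind μ D * nrm (x - y) ∧
    z = ind μ D - ind μ D * nrm (mid μ sm x y)}

/-- `S` is random uniformly convex: `δ_{H(S)}(ε) > 0` on `H(S)` for every admissible `ε`. -/
def RandomUniformlyConvex (μ : Measure Ω) (sm : L0 μ → S → S) (nrm : S → L0 μ)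
    (H : Set Ω) : Prop :=
  ∀ ε : L0 μ, Admissible μ H ε → ∀ d : L0 μ, IsGLB (modSet μ sm nrm H ε) d →
    ∀ᵐ ω ∂μ, ω ∈ H → 0 < d ω

/-- `G` is (a representative of) `G(S)`. -/
def IsGSet (μ : Measure Ω) (sm : L0 μ → S → S) (H G : Set Ω) : Prop :=
  MeasurableSet G ∧ aeSub μ G H ∧ 0 < μ G ∧ RankGe2 sm G ∧
    ∀ D : Set Ω, MeasurableSet D → aeSub μ D (H \ G) → 0 < μ D → ¬ RankGe2 sm D


/-! ### Auxiliary material for Proposition 2.3 -/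

section PropAux

variable {μ : Measure Ω} {S : Type*} [AddCommGroup S]
variable {sm : L0 μ → S → S} {nrm : S → L0 μ}

/-! #### L⁰ algebra helpers -/

lemma L0.mul_add' (a b c : L0 μ) : a * (b + c) = a * b + a * c := by
  apply AEEqFun.toGerm_injective
  simp only [AEEqFun.mul_toGerm, AEEqFun.add_toGerm]; ring

lemma L0.add_mul' (a b c : L0 μ) : (a + b) * c = a * c + b * c := by
  apply AEEqFun.toGerm_injective
  simp only [AEEqFun.mul_toGerm, AEEqFun.add_toGerm]; ring

lemma L0.sub_mul' (a b c : L0 μ) : (a - b) * c = a * c - b * c := by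
  apply AEEqFun.toGerm_injective
  simp only [AEEqFun.mul_toGerm, AEEqFun.sub_toGerm]; ring

lemma L0.neg_mul' (a b : L0 μ) : (-a) * b = -(a * b) := by
  apply AEEqFun.toGerm_injective
  simp only [AEEqFun.mul_toGerm, AEEqFun.neg_toGerm]; ring

lemma L0.zero_mul' (a : L0 μ) : 0 * a = 0 := by
  apply AEEqFun.toGerm_injective
  simp only [AEEqFun.mul_toGerm, AEEqFun.zero_toGerm]; ring

lemma L0.mul_zero' (a : L0 μ) : a * 0 = 0 := by
  apply AEEqFun.toGerm_injective
  simp only [AEEqFun.mul_toGerm, AEEqFun.zero_toGerm]; ring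

/-! #### indicator helpers -/

lemma ind_coeFn {A : Set Ω} (hA : MeasurableSet A) :
    ⇑(ind μ A) =ᵐ[μ] A.indicator (fun _ => (1 : ℝ)) := by
  rw [ind, dif_pos hA]; exact AEEqFun.coeFn_mk _ _

lemma ind_mul_ind {A B : Set Ω} (hA : MeasurableSet A) (hB : MeasurableSet B) :
    ind μ A * ind μ B = ind μ (A ∩ B) := by
  apply AEEqFun.ext
  filter_upwards [AEEqFun.coeFn_mul (ind μ A) (ind μ B), ind_coeFn hA, ind_coeFn hB,
    ind_coeFn (hA.inter hB)] with ω h1 h2 h3 h4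
  rw [h1, Pi.mul_apply, h2, h3, h4]
  by_cases hωA : ω ∈ A <;> by_cases hωB : ω ∈ B <;>
    simp [Set.indicator_apply, hωA, hωB, Set.mem_inter_iff]

lemma ind_mul_of_subset {A B : Set Ω} (hA : MeasurableSet A) (hB : MeasurableSet B)
    (h : A ⊆ B) : ind μ A * ind μ B = ind μ A := by
  rw [ind_mul_ind hA hB, Set.inter_eq_self_of_subset_left h]

lemma ind_null {A : Set Ω} (hA : MeasurableSet A) (h : μ A = 0) : ind μ A = 0 := by
  apply AEEqFun.ext
  filter_upwards [ind_coeFn hA, AEEqFun.coeFn_zero (β := ℝ) (μ := μ),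
    measure_eq_zero_iff_ae_notMem.1 h] with ω h1 h2 h3
  rw [h1, h2]; simp [Set.indicator_apply, h3]

lemma measure_eq_zero_of_ind {A : Set Ω} (hA : MeasurableSet A) (h : ind μ A = 0) :
    μ A = 0 := by
  have h1 : A.indicator (fun _ => (1 : ℝ)) =ᵐ[μ] 0 := by
    have h2 := ind_coeFn (μ := μ) hA
    rw [h] at h2
    exact h2.symm.trans AEEqFun.coeFn_zero
  rw [measure_eq_zero_iff_ae_notMem]
  filter_upwards [h1] with ω hω
  intro hωA
  simp [Set.indicator_apply, hωA] at hω

lemma ind_congr_ae {A B : Set Ω} (hA : MeasurableSet A) (hB : MeasurableSet B)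
    (h1 : μ (A \ B) = 0) (h2 : μ (B \ A) = 0) : ind μ A = ind μ B := by
  apply AEEqFun.ext
  filter_upwards [ind_coeFn hA, ind_coeFn hB, measure_eq_zero_iff_ae_notMem.1 h1,
    measure_eq_zero_iff_ae_notMem.1 h2] with ω e1 e2 m1 m2
  rw [e1, e2]
  simp only [Set.mem_diff, not_and, not_not] at m1 m2
  by_cases hωA : ω ∈ A
  · simp [Set.indicator_apply, hωA, m1 hωA]
  · have hωB : ω ∉ B := fun hωB => hωA (m2 hωB)
    simp [Set.indicator_apply, hωA, hωB]

lemma ind_add_disjoint {A B : Set Ω} (hA : MeasurableSet A) (hB : MeasurableSet B)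
    (h : Disjoint A B) : ind μ (A ∪ B) = ind μ A + ind μ B := by
  apply AEEqFun.ext
  filter_upwards [ind_coeFn (hA.union hB), ind_coeFn hA, ind_coeFn hB,
    AEEqFun.coeFn_add (ind μ A) (ind μ B)] with ω e1 e2 e3 e4
  rw [e1, e4, Pi.add_apply, e2, e3]
  by_cases hωA : ω ∈ A
  · have hωB : ω ∉ B := fun hωB => Set.disjoint_left.1 h hωA hωB
    simp [Set.indicator_apply, hωA, hωB]
  · by_cases hωB : ω ∈ B <;> simp [Set.indicator_apply, hωA, hωB]

/-! #### RN module helpers -/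

lemma sm_zero_left (hRN : IsRNModule μ sm nrm) (x : S) : sm 0 x = 0 := by
  have h := hRN.add_smul 0 0 x
  rw [add_zero] at h
  have h2 : sm (0 : L0 μ) x + 0 = sm 0 x + sm 0 x := by rw [add_zero]; exact h
  exact (add_left_cancel h2).symm

lemma sm_zero_right (hRN : IsRNModule μ sm nrm) (ξ : L0 μ) : sm ξ 0 = 0 := by
  have h := hRN.smul_add ξ 0 0
  rw [add_zero] at h
  have h2 : sm ξ (0 : S) + 0 = sm ξ 0 + sm ξ 0 := by rw [add_zero]; exact h
  exact (add_left_cancel h2).symm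

lemma sm_neg_left (hRN : IsRNModule μ sm nrm) (ξ : L0 μ) (x : S) :
    sm (-ξ) x = -(sm ξ x) := by
  have h := hRN.add_smul ξ (-ξ) x
  rw [add_neg_cancel, sm_zero_left hRN] at h
  exact (neg_eq_of_add_eq_zero_right h.symm).symm

lemma sm_sub_left (hRN : IsRNModule μ sm nrm) (ξ η : L0 μ) (x : S) :
    sm (ξ - η) x = sm ξ x - sm η x := by
  rw [sub_eq_add_neg, hRN.add_smul, sm_neg_left hRN, sub_eq_add_neg]

lemma nrm_zero (hRN : IsRNModule μ sm nrm) : nrm (0 : S) = 0 := by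
  have h0 : (0 : S) = sm 0 0 := (sm_zero_left hRN 0).symm
  rw [h0, hRN.nrm_smul]
  apply AEEqFun.ext
  filter_upwards [AEEqFun.coeFn_mul |(0 : L0 μ)| (nrm (0 : S)),
    AEEqFun.coeFn_abs (0 : L0 μ), AEEqFun.coeFn_zero (β := ℝ) (μ := μ)] with ω e1 e2 e3
  rw [e1, Pi.mul_apply, e2, e3]
  simp

/-! #### Bad sets: sets on which `z` is an `L⁰`-multiple of `u` -/

/-- `C` is a measurable subset of `G` on which `z` is an `L⁰`-multiple of `u`. -/
def BadSet (μ : Measure Ω) (sm : L0 μ → S → S) (u z : S) (G C : Set Ω) : Prop :=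
  MeasurableSet C ∧ C ⊆ G ∧ ∃ ξ : L0 μ, sm (ind μ C) z = sm (ξ * ind μ C) u

lemma badSet_empty (hRN : IsRNModule μ sm nrm) (u z : S) (G : Set Ω) :
    BadSet μ sm u z G ∅ := by
  refine ⟨MeasurableSet.empty, Set.empty_subset _, 0, ?_⟩
  have h0 : ind μ (∅ : Set Ω) = 0 := ind_null MeasurableSet.empty measure_empty
  rw [h0, L0.zero_mul', sm_zero_left hRN, sm_zero_left hRN]

lemma badSet_mono {u z : S} {G G' C : Set Ω} (hG : G ⊆ G')
    (h : BadSet μ sm u z G C) : BadSet μ sm u z G' C :=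
  ⟨h.1, h.2.1.trans hG, h.2.2⟩

lemma badSet_inter (hRN : IsRNModule μ sm nrm) {u z : S} {G C : Set Ω}
    (h : BadSet μ sm u z G C) {D : Set Ω} (hD : MeasurableSet D) :
    BadSet μ sm u z G (C ∩ D) := by
  obtain ⟨hC, hCG, ξ, hξ⟩ := h
  refine ⟨hC.inter hD, Set.inter_subset_left.trans hCG, ξ, ?_⟩
  have e1 : ind μ (C ∩ D) = ind μ D * ind μ C := by
    rw [ind_mul_ind hD hC, Set.inter_comm]
  rw [e1, hRN.mul_smul, hξ, ← hRN.mul_smul]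
  congr 1
  rw [← mul_assoc, mul_comm (ind μ D) ξ, mul_assoc]

lemma badSet_union (hRN : IsRNModule μ sm nrm) {u z : S} {G C₁ C₂ : Set Ω}
    (h1 : BadSet μ sm u z G C₁) (h2 : BadSet μ sm u z G C₂) :
    BadSet μ sm u z G (C₁ ∪ C₂) := by
  obtain ⟨hC1, hC1G, ξ₁, hξ₁⟩ := h1
  obtain ⟨hC2, hC2G, ξ₂, hξ₂⟩ := h2
  have hC2' : MeasurableSet (C₂ \ C₁) := hC2.diff hC1
  have hCU : MeasurableSet (C₁ ∪ C₂) := hC1.union hC2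
  refine ⟨hCU, Set.union_subset hC1G hC2G, ξ₁ * ind μ C₁ + ξ₂ * ind μ (C₂ \ C₁), ?_⟩
  have hsplit : ind μ (C₁ ∪ C₂) = ind μ C₁ + ind μ (C₂ \ C₁) := by
    rw [← ind_add_disjoint hC1 hC2' disjoint_sdiff_self_right, Set.union_diff_self]
  have h2' : sm (ind μ (C₂ \ C₁)) z = sm (ξ₂ * ind μ (C₂ \ C₁)) u := by
    have e : ind μ (C₂ \ C₁) = ind μ (C₂ \ C₁) * ind μ C₂ :=
      (ind_mul_of_subset hC2' hC2 Set.diff_subset).symm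
    rw [e, hRN.mul_smul, hξ₂, ← hRN.mul_smul]
    congr 1
    rw [← mul_assoc, mul_comm (ind μ (C₂ \ C₁)) ξ₂, mul_assoc, ← e]
  have hcoef : (ξ₁ * ind μ C₁ + ξ₂ * ind μ (C₂ \ C₁)) * ind μ (C₁ ∪ C₂)
      = ξ₁ * ind μ C₁ + ξ₂ * ind μ (C₂ \ C₁) := by
    rw [L0.add_mul']
    congr 1
    · rw [mul_assoc, ind_mul_of_subset hC1 hCU Set.subset_union_left]
    · rw [mul_assoc, ind_mul_of_subset hC2' hCU
        (Set.diff_subset.trans Set.subset_union_right)]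
  calc sm (ind μ (C₁ ∪ C₂)) z
      = sm (ind μ C₁) z + sm (ind μ (C₂ \ C₁)) z := by rw [hsplit, hRN.add_smul]
    _ = sm (ξ₁ * ind μ C₁) u + sm (ξ₂ * ind μ (C₂ \ C₁)) u := by rw [hξ₁, h2']
    _ = sm ((ξ₁ * ind μ C₁ + ξ₂ * ind μ (C₂ \ C₁)) * ind μ (C₁ ∪ C₂)) u := by
        rw [hcoef, hRN.add_smul]

lemma acc_succ (A : ℕ → Set Ω) (n : ℕ) :
    Set.accumulate A (n + 1) = Set.accumulate A n ∪ A (n + 1) := by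
  ext ω
  simp only [Set.mem_accumulate, Set.mem_union, Nat.le_succ_iff]
  constructor
  · rintro ⟨y, hy | hy, hωy⟩
    · exact Or.inl ⟨y, hy, hωy⟩
    · subst hy; exact Or.inr hωy
  · rintro (⟨y, hy, hωy⟩ | hω)
    · exact ⟨y, Or.inl hy, hωy⟩
    · exact ⟨n + 1, Or.inr rfl, hω⟩

/-- Existence of a maximal bad set (as a countable union of bad sets). -/
lemma exists_maximal_bad (hRN : IsRNModule μ sm nrm) [IsProbabilityMeasure μ]
    (u z : S) (G : Set Ω) :
    ∃ B : Set Ω, MeasurableSet B ∧ B ⊆ G ∧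
      (∃ A : ℕ → Set Ω, (∀ n, BadSet μ sm u z G (A n)) ∧ B = ⋃ n, A n) ∧
      ∀ C, BadSet μ sm u z G C → μ (C \ B) = 0 := by
  classical
  set c : ENNReal := ⨆ (C : Set Ω) (_ : BadSet μ sm u z G C), μ C with hc
  have hle : ∀ C, BadSet μ sm u z G C → μ C ≤ c := fun C h =>
    le_iSup₂ (f := fun (C : Set Ω) (_ : BadSet μ sm u z G C) => μ C) C h
  have hcone : c ≤ 1 := iSup₂_le fun C _ => prob_le_one
  have hcT : c ≠ ⊤ := (hcone.trans_lt ENNReal.one_lt_top).ne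
  have hseq : ∀ n : ℕ, ∃ C, BadSet μ sm u z G C ∧ c ≤ μ C + ((n : ENNReal) + 1)⁻¹ := by
    intro n
    have hε0 : ((n : ENNReal) + 1)⁻¹ ≠ 0 :=
      ENNReal.inv_ne_zero.2 (ENNReal.add_ne_top.2 ⟨ENNReal.natCast_ne_top n, ENNReal.one_ne_top⟩)
    by_cases hcε : c ≤ ((n : ENNReal) + 1)⁻¹
    · refine ⟨∅, badSet_empty hRN u z G, ?_⟩
      simpa [measure_empty] using hcε
    · push_neg at hcε
      have hc0 : c ≠ 0 := fun h => by simp [h] at hcε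
      have hlt : c - ((n : ENNReal) + 1)⁻¹ < c := ENNReal.sub_lt_self hcT hc0 hε0
      rw [hc, lt_iSup_iff] at hlt
      obtain ⟨C, hC⟩ := hlt
      rw [lt_iSup_iff] at hC
      obtain ⟨hCbad, hC⟩ := hC
      exact ⟨C, hCbad, tsub_le_iff_right.1 hC.le⟩
  choose A hAbad hAc using hseq
  refine ⟨⋃ n, A n, MeasurableSet.iUnion fun n => (hAbad n).1,
    Set.iUnion_subset fun n => (hAbad n).2.1, ⟨A, hAbad, rfl⟩, ?_⟩
  have haccbad : ∀ n, BadSet μ sm u z G (Set.accumulate A n) := by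
    intro n
    induction n with
    | zero => simpa [Set.accumulate_def] using hAbad 0
    | succ k ih => rw [acc_succ]; exact badSet_union hRN ih (hAbad (k + 1))
  have hcB : c ≤ μ (⋃ n, A n) := by
    apply ENNReal.le_of_forall_pos_le_add
    intro δ hδ _
    obtain ⟨n, hn⟩ := ENNReal.exists_inv_nat_lt
      (a := (δ : ENNReal)) (by exact_mod_cast hδ.ne')
    have h1 : ((n : ENNReal) + 1)⁻¹ ≤ ((n : ENNReal))⁻¹ := ENNReal.inv_le_inv.2 le_self_add
    calc c ≤ μ (A n) + ((n : ENNReal) + 1)⁻¹ := hAc n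
    _ ≤ μ (⋃ n, A n) + (δ : ENNReal) :=
      add_le_add (measure_mono (Set.subset_iUnion A n)) (h1.trans hn.le)
  intro C hC
  have hCm : MeasurableSet C := hC.1
  have hBm : MeasurableSet (⋃ n, A n) := MeasurableSet.iUnion fun n => (hAbad n).1
  have hBC : μ ((⋃ n, A n) ∪ C) ≤ c := by
    have hUeq : (⋃ n, A n) ∪ C = ⋃ n, (Set.accumulate A n ∪ C) := by
      rw [← Set.iUnion_accumulate, Set.iUnion_union]
    rw [hUeq]
    have hmono : Monotone fun n => Set.accumulate A n ∪ C := fun m n hmn =>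
      Set.union_subset_union_left C (Set.monotone_accumulate hmn)
    rw [hmono.directed_le.measure_iUnion]
    exact iSup_le fun n => hle _ (badSet_union hRN (haccbad n) hC)
  have hun : μ (⋃ n, A n) + μ (C \ ⋃ n, A n) = μ ((⋃ n, A n) ∪ C) := by
    rw [← measure_union disjoint_sdiff_self_right (hCm.diff hBm), Set.union_diff_self]
  have hfin : μ (⋃ n, A n) + μ (C \ ⋃ n, A n) ≤ μ (⋃ n, A n) + 0 := by
    rw [add_zero, hun]
    exact hBC.trans hcB
  exact le_zero_iff.1 ((ENNReal.add_le_add_iff_left (measure_ne_top μ _)).1 hfin)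

/-- L⁰-independence restricts to measurable subsets. -/
lemma indep_mono {x y : S} {G : Set Ω} (hxy : Indep sm x y G) (hGm : MeasurableSet G)
    {D : Set Ω} (hD : MeasurableSet D) (hDG : D ⊆ G) : Indep sm x y D := by
  intro ξ η h
  have key : ∀ ζ : L0 μ, ζ * ind μ D * ind μ G = ζ * ind μ D := by
    intro ζ; rw [mul_assoc, ind_mul_of_subset hD hGm hDG]
  have h' : sm (ξ * ind μ D * ind μ G) x + sm (η * ind μ D * ind μ G) y = 0 := by
    rw [key, key]; exact h
  obtain ⟨h1, h2⟩ := hxy _ _ h'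
  rw [key] at h1 h2
  exact ⟨h1, h2⟩

/-- A set that is bad for both `x + y` and `x + y + y` is null, when `x, y` are
independent on `G`. -/
lemma null_of_doubly_bad (hRN : IsRNModule μ sm nrm) {u x y : S} {G : Set Ω}
    (hGm : MeasurableSet G) (hxy : Indep sm x y G) {D : Set Ω}
    (h1 : BadSet μ sm u (x + y) G D) (h2 : BadSet μ sm u (x + y + y) G D) :
    μ D = 0 := by
  obtain ⟨hDm, hDG, a, ha⟩ := h1
  obtain ⟨-, -, b, hb⟩ := h2
  have hxyD := indep_mono hxy hGm hDm hDG
  have hy : sm (ind μ D) y = sm ((b - a) * ind μ D) u := by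
    have e1 : sm (ind μ D) y = sm (ind μ D) (x + y + y) - sm (ind μ D) (x + y) := by
      rw [hRN.smul_add (ind μ D) (x + y) y]; abel
    rw [e1, ha, hb, L0.sub_mul', sm_sub_left hRN]
  have hx : sm (ind μ D) x = sm ((a - (b - a)) * ind μ D) u := by
    have e1 : sm (ind μ D) x = sm (ind μ D) (x + y) - sm (ind μ D) y := by
      rw [hRN.smul_add (ind μ D) x y]; abel
    have e2 : sm ((a - (b - a)) * ind μ D) u
        = sm (a * ind μ D) u - sm ((b - a) * ind μ D) u := by
      rw [L0.sub_mul', sm_sub_left hRN]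
    rw [e2, ← hy, ← ha]
    exact e1
  have htest : sm ((b - a) * ind μ D) x + sm ((-(a - (b - a))) * ind μ D) y = 0 := by
    rw [hRN.mul_smul (b - a) (ind μ D) x, hRN.mul_smul (-(a - (b - a))) (ind μ D) y,
      hx, hy, ← hRN.mul_smul, ← hRN.mul_smul, ← hRN.add_smul]
    have hco : (b - a) * ((a - (b - a)) * ind μ D)
        + (-(a - (b - a))) * ((b - a) * ind μ D) = 0 := by
      rw [L0.neg_mul', mul_left_comm]
      exact add_neg_cancel _
    rw [hco, sm_zero_left hRN]
  obtain ⟨hc1, hc2⟩ := hxyD (b - a) (-(a - (b - a))) htest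
  have hc2' : (a - (b - a)) * ind μ D = 0 := by
    rwa [L0.neg_mul', neg_eq_zero] at hc2
  have hy0 : sm (ind μ D) y = 0 := by rw [hy, hc1, sm_zero_left hRN]
  have hx0 : sm (ind μ D) x = 0 := by rw [hx, hc2', sm_zero_left hRN]
  have hfin := hxyD 1 0 (by
    rw [one_mul, L0.zero_mul', sm_zero_left hRN, hx0, add_zero])
  have h1' : (1 : L0 μ) * ind μ D = 0 := hfin.1
  rw [one_mul] at h1'
  exact measure_eq_zero_of_ind hDm h1'

/-- On a set with no nonnull bad subsets, `u` and `z` are independent. -/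
lemma indep_on_clean (hRN : IsRNModule μ sm nrm) {u z : S} {G E : Set Ω}
    (hGm : MeasurableSet G) (hEm : MeasurableSet E) (hEG : E ⊆ G)
    (hu : nrm u = ind μ G)
    (hclean : ∀ C, BadSet μ sm u z E C → μ C = 0) :
    ∀ ξ η : L0 μ, sm (ξ * ind μ E) u + sm (η * ind μ E) z = 0 →
      ξ * ind μ E = 0 ∧ η * ind μ E = 0 := by
  intro ξ η h
  obtain ⟨g, hgm, hgη⟩ : ∃ g : Ω → ℝ, Measurable g ∧ ⇑η =ᵐ[μ] g :=
    ⟨η.aestronglyMeasurable.aemeasurable.mk η,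
      η.aestronglyMeasurable.aemeasurable.measurable_mk,
      η.aestronglyMeasurable.aemeasurable.ae_eq_mk⟩
  set C : Set Ω := (g ⁻¹' {0})ᶜ ∩ E with hCdef
  have hCm : MeasurableSet C := (hgm (measurableSet_singleton 0)).compl.inter hEm
  have hCE : C ⊆ E := Set.inter_subset_right
  set η' : L0 μ := AEEqFun.mk (C.indicator fun ω => (g ω)⁻¹)
    ((hgm.inv.indicator hCm).aestronglyMeasurable) with hη'def
  have hη'η : η' * η = ind μ C := by
    apply AEEqFun.ext
    filter_upwards [AEEqFun.coeFn_mul η' η, AEEqFun.coeFn_mk _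
      ((hgm.inv.indicator hCm).aestronglyMeasurable), hgη, ind_coeFn hCm] with ω e1 e2 e3 e4
    rw [e1, Pi.mul_apply, show (⇑η' : Ω → ℝ) ω = C.indicator (fun ω => (g ω)⁻¹) ω from e2, e3, e4]
    by_cases hωC : ω ∈ C
    · have hg0 : g ω ≠ 0 := fun h0 => hωC.1 (by simp [h0])
      simp [Set.indicator_apply, hωC, inv_mul_cancel₀ hg0]
    · simp [Set.indicator_apply, hωC]
  have hη'C : η' * ind μ C = η' := by
    apply AEEqFun.ext
    filter_upwards [AEEqFun.coeFn_mul η' (ind μ C), AEEqFun.coeFn_mk _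
      ((hgm.inv.indicator hCm).aestronglyMeasurable), ind_coeFn hCm] with ω e1 e2 e3
    rw [e1, Pi.mul_apply, show (⇑η' : Ω → ℝ) ω = C.indicator (fun ω => (g ω)⁻¹) ω from e2, e3]
    by_cases hωC : ω ∈ C <;> simp [Set.indicator_apply, hωC]
  have h2 : sm (η' * (ξ * ind μ E)) u + sm (ind μ C) z = 0 := by
    have h0 := congrArg (sm η') h
    rw [hRN.smul_add, ← hRN.mul_smul, ← hRN.mul_smul, sm_zero_right hRN] at h0
    have e5 : η' * (η * ind μ E) = ind μ C := by
      rw [← mul_assoc, hη'η, ind_mul_of_subset hCm hEm hCE]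
    rwa [e5] at h0
  have hη'E : η' * ind μ E = η' := by
    apply AEEqFun.ext
    filter_upwards [AEEqFun.coeFn_mul η' (ind μ E), AEEqFun.coeFn_mk _
      ((hgm.inv.indicator hCm).aestronglyMeasurable), ind_coeFn hEm] with ω e1 e2 e3
    rw [e1, Pi.mul_apply, show (⇑η' : Ω → ℝ) ω = C.indicator (fun ω => (g ω)⁻¹) ω from e2, e3]
    by_cases hωC : ω ∈ C
    · simp [Set.indicator_apply, hωC, hCE hωC]
    · simp [Set.indicator_apply, hωC]
  have hbadC : BadSet μ sm u z E C := by
    refine ⟨hCm, hCE, -(η' * ξ), ?_⟩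
    have e6 : sm (ind μ C) z = sm (-(η' * (ξ * ind μ E))) u := by
      rw [sm_neg_left hRN]
      exact eq_neg_of_add_eq_zero_right h2
    rw [e6]
    congr 1
    rw [L0.neg_mul', neg_inj, ← mul_assoc, mul_comm η' ξ, mul_assoc ξ η' (ind μ E),
      mul_assoc ξ η' (ind μ C), hη'E, hη'C]
  have hC0 : μ C = 0 := hclean C hbadC
  have hη0 : η * ind μ E = 0 := by
    apply AEEqFun.ext
    filter_upwards [AEEqFun.coeFn_mul η (ind μ E), hgη, ind_coeFn hEm,
      measure_eq_zero_iff_ae_notMem.1 hC0, AEEqFun.coeFn_zero (β := ℝ) (μ := μ)]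
      with ω e1 e2 e3 e4 e5
    rw [e1, Pi.mul_apply, e2, e3, e5]
    by_cases hωE : ω ∈ E
    · have : g ω = 0 := by
        by_contra hg
        exact e4 ⟨fun hmem => hg hmem, hωE⟩
      simp [Set.indicator_apply, hωE, this]
    · simp [Set.indicator_apply, hωE]
  rw [hη0, sm_zero_left hRN, add_zero] at h
  have hn : |ξ * ind μ E| * ind μ G = 0 := by
    have := congrArg nrm h
    rwa [hRN.nrm_smul, nrm_zero hRN, hu] at this
  have hξ0 : ξ * ind μ E = 0 := by
    apply AEEqFun.ext
    have hae : ⇑(|ξ * ind μ E| * ind μ G) =ᵐ[μ] 0 := by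
      rw [hn]; exact AEEqFun.coeFn_zero
    filter_upwards [hae, AEEqFun.coeFn_mul |ξ * ind μ E| (ind μ G),
      AEEqFun.coeFn_abs (ξ * ind μ E), AEEqFun.coeFn_mul ξ (ind μ E),
      ind_coeFn hEm, ind_coeFn hGm, AEEqFun.coeFn_zero (β := ℝ) (μ := μ)]
      with ω e0 e1 e2 e3 e4 e5 e6
    rw [e3, Pi.mul_apply, e4, e6]
    rw [e1, Pi.mul_apply, e2, e3, Pi.mul_apply, e4, e5] at e0
    by_cases hωE : ω ∈ E
    · have hωG : ω ∈ G := hEG hωE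
      rw [Set.indicator_of_mem hωE, Pi.zero_apply, mul_one] at e0 ⊢
      rw [Set.indicator_of_mem hωG, mul_one] at e0
      exact abs_eq_zero.1 e0
    · rw [Set.indicator_of_notMem hωE, Pi.zero_apply, mul_zero]
  exact ⟨hξ0, hη0⟩

end PropAux

/-- **Proposition 2.3.** If `P(G(S)) > 0` and `‖u‖ = I_{G(S)}`, then there exists `v` with
`‖v‖ = I_{G(S)}` such that `u` and `v` are `L⁰`-independent on `G(S)`. -/
theorem exists_independent_complement {Ω : Type*} [MeasurableSpace Ω] (μ : Measure Ω)
    [IsProbabilityMeasure μ] {S : Type*} [AddCommGroup S]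
    (sm : L0 μ → S → S) (nrm : S → L0 μ) (hRN : IsRNModule μ sm nrm)
    (hcomp : CompleteRN μ nrm) (H : Set Ω) (hH : IsSupport nrm H)
    (G : Set Ω) (hG : IsGSet μ sm H G)
    (u : S) (hu : nrm u = ind μ G) :
    ∃ v : S, nrm v = ind μ G ∧ Indep sm u v G := by
  classical
  obtain ⟨hGm, -, hGpos, ⟨x, y, hxy⟩, -⟩ := hG
  obtain ⟨B, hBm, hBG, ⟨A, hAbad, hBU⟩, hBmax⟩ := exists_maximal_bad hRN u (x + y) G
  obtain ⟨B', hB'm, hB'G, ⟨A', hA'bad, hB'U⟩, hB'max⟩ :=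
    exists_maximal_bad hRN u (x + y + y) G
  have hBB' : μ (B ∩ B') = 0 := by
    have heq : B ∩ B' = ⋃ n, ⋃ m, (A n ∩ A' m) := by
      rw [hBU, hB'U]; ext ω
      simp only [Set.mem_inter_iff, Set.mem_iUnion]
      tauto
    rw [heq]
    refine measure_iUnion_null fun n => measure_iUnion_null fun m => ?_
    refine null_of_doubly_bad hRN hGm hxy (badSet_inter hRN (hAbad n) (hA'bad m).1) ?_
    have := badSet_inter hRN (hA'bad m) (hAbad n).1
    rwa [Set.inter_comm] at this
  have hEm : MeasurableSet (G \ B) := hGm.diff hBm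
  have hE'm : MeasurableSet (B \ B') := hBm.diff hB'm
  have hEG : G \ B ⊆ G := Set.diff_subset
  have hE'G : B \ B' ⊆ G := Set.diff_subset.trans hBG
  have hcleanE : ∀ C, BadSet μ sm u (x + y) (G \ B) C → μ C = 0 := by
    intro C hC
    have h1 := hBmax C (badSet_mono hEG hC)
    have hd : C \ B = C :=
      sdiff_eq_self_iff_disjoint.2 (Set.disjoint_left.2 fun ω hωB hωC => (hC.2.1 hωC).2 hωB)
    rwa [hd] at h1
  have hcleanE' : ∀ C, BadSet μ sm u (x + y + y) (B \ B') C → μ C = 0 := by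
    intro C hC
    have h1 := hB'max C (badSet_mono hE'G hC)
    have hd : C \ B' = C :=
      sdiff_eq_self_iff_disjoint.2 (Set.disjoint_left.2 fun ω hωB hωC => (hC.2.1 hωC).2 hωB)
    rwa [hd] at h1
  have hIE := indep_on_clean hRN hGm hEm hEG hu hcleanE
  have hIE' := indep_on_clean hRN hGm hE'm hE'G hu hcleanE'
  set w : S := sm (ind μ (G \ B)) (x + y) + sm (ind μ (B \ B')) (x + y + y) with hwdef
  have hEE' : ind μ (G \ B) * ind μ (B \ B') = 0 := by
    rw [ind_mul_ind hEm hE'm]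
    have he : (G \ B) ∩ (B \ B') = ∅ := by
      ext ω; simp only [Set.mem_inter_iff, Set.mem_diff, Set.mem_empty_iff_false, iff_false]
      rintro ⟨⟨-, h1⟩, h2, -⟩; exact h1 h2
    rw [he]
    exact ind_null MeasurableSet.empty measure_empty
  have hindG : ind μ G = ind μ (G \ B) + ind μ (B \ B') := by
    have hdisj : Disjoint (G \ B) (B \ B') := by
      rw [Set.disjoint_left]
      rintro ω ⟨-, h1⟩ ⟨h2, -⟩; exact h1 h2
    rw [← ind_add_disjoint hEm hE'm hdisj]
    apply ind_congr_ae hGm (hEm.union hE'm)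
    · apply measure_mono_null _ hBB'
      rintro ω ⟨hωG, hω⟩
      simp only [Set.mem_union, Set.mem_diff, not_or, not_and, not_not] at hω
      exact ⟨hω.1 hωG, hω.2 (hω.1 hωG)⟩
    · have : (G \ B) ∪ (B \ B') ⊆ G := Set.union_subset hEG hE'G
      rw [Set.diff_eq_empty.2 this]
      exact measure_empty
  have hsm_w : ∀ ζ : L0 μ, sm ζ w
      = sm (ζ * ind μ (G \ B)) (x + y) + sm (ζ * ind μ (B \ B')) (x + y + y) := by
    intro ζ; rw [hwdef, hRN.smul_add, ← hRN.mul_smul, ← hRN.mul_smul]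
  have hw : Indep sm u w G := by
    intro ξ η h
    have hE_G : ind μ (G \ B) * ind μ G = ind μ (G \ B) := ind_mul_of_subset hEm hGm hEG
    have hE'_G : ind μ (B \ B') * ind μ G = ind μ (B \ B') := ind_mul_of_subset hE'm hGm hE'G
    have hEidem : ind μ (G \ B) * ind μ (G \ B) = ind μ (G \ B) :=
      ind_mul_of_subset hEm hEm subset_rfl
    have hE'idem : ind μ (B \ B') * ind μ (B \ B') = ind μ (B \ B') :=
      ind_mul_of_subset hE'm hE'm subset_rfl
    have h1 : sm (ξ * ind μ (G \ B)) u + sm (η * ind μ (G \ B)) (x + y) = 0 := by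
      have h0 := congrArg (sm (ind μ (G \ B))) h
      rw [hRN.smul_add, sm_zero_right hRN, ← hRN.mul_smul, ← hRN.mul_smul] at h0
      have c1 : ind μ (G \ B) * (ξ * ind μ G) = ξ * ind μ (G \ B) := by
        rw [mul_left_comm, hE_G]
      have c2 : ind μ (G \ B) * (η * ind μ G) = η * ind μ (G \ B) := by
        rw [mul_left_comm, hE_G]
      rw [c1, c2, hsm_w (η * ind μ (G \ B))] at h0
      have c3 : η * ind μ (G \ B) * ind μ (G \ B) = η * ind μ (G \ B) := by
        rw [mul_assoc, hEidem]
      have c4 : η * ind μ (G \ B) * ind μ (B \ B') = 0 := by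
        rw [mul_assoc, hEE', L0.mul_zero']
      rwa [c3, c4, sm_zero_left hRN, add_zero] at h0
    obtain ⟨hξE, hηE⟩ := hIE ξ η h1
    have h2 : sm (ξ * ind μ (B \ B')) u + sm (η * ind μ (B \ B')) (x + y + y) = 0 := by
      have h0 := congrArg (sm (ind μ (B \ B'))) h
      rw [hRN.smul_add, sm_zero_right hRN, ← hRN.mul_smul, ← hRN.mul_smul] at h0
      have c1 : ind μ (B \ B') * (ξ * ind μ G) = ξ * ind μ (B \ B') := by
        rw [mul_left_comm, hE'_G]
      have c2 : ind μ (B \ B') * (η * ind μ G) = η * ind μ (B \ B') := by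
        rw [mul_left_comm, hE'_G]
      rw [c1, c2, hsm_w (η * ind μ (B \ B'))] at h0
      have c3 : η * ind μ (B \ B') * ind μ (B \ B') = η * ind μ (B \ B') := by
        rw [mul_assoc, hE'idem]
      have c4 : η * ind μ (B \ B') * ind μ (G \ B) = 0 := by
        rw [mul_assoc, mul_comm (ind μ (B \ B')), hEE', L0.mul_zero']
      rwa [c3, c4, sm_zero_left hRN, zero_add] at h0
    obtain ⟨hξE', hηE'⟩ := hIE' ξ η h2
    constructor
    · rw [hindG, L0.mul_add', hξE, hξE', add_zero]
    · rw [hindG, L0.mul_add', hηE, hηE', add_zero]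
  -- normalize w
  obtain ⟨g, hgm, hgw⟩ : ∃ g : Ω → ℝ, Measurable g ∧ ⇑(nrm w) =ᵐ[μ] g :=
    ⟨(nrm w).aestronglyMeasurable.aemeasurable.mk (nrm w),
      (nrm w).aestronglyMeasurable.aemeasurable.measurable_mk,
      (nrm w).aestronglyMeasurable.aemeasurable.ae_eq_mk⟩
  set N : Set Ω := (g ⁻¹' {0}) ∩ G with hNdef
  have hNm : MeasurableSet N := (hgm (measurableSet_singleton 0)).inter hGm
  have hNsub : N ⊆ G := Set.inter_subset_right
  have hsmN : sm (ind μ N) w = 0 := by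
    apply hRN.nrm_eq_zero
    rw [hRN.nrm_smul]
    apply AEEqFun.ext
    filter_upwards [AEEqFun.coeFn_mul |ind μ N| (nrm w), AEEqFun.coeFn_abs (ind μ N),
      ind_coeFn hNm, hgw, AEEqFun.coeFn_zero (β := ℝ) (μ := μ)] with ω e1 e2 e3 e4 e5
    rw [e1, Pi.mul_apply, e2, e3, e5]
    by_cases hωN : ω ∈ N
    · have hg0 : g ω = 0 := hωN.1
      rw [e4, hg0]
      simp
    · simp [Set.indicator_apply, hωN]
  have hμN : μ N = 0 := by
    have h0 : sm ((0 : L0 μ) * ind μ G) u + sm (ind μ N * ind μ G) w = 0 := by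
      rw [L0.zero_mul', sm_zero_left hRN, zero_add, ind_mul_of_subset hNm hGm hNsub, hsmN]
    have hres := (hw 0 (ind μ N) h0).2
    rw [ind_mul_of_subset hNm hGm hNsub] at hres
    exact measure_eq_zero_of_ind hNm hres
  have hgpos : ∀ᵐ ω ∂μ, ω ∈ G → 0 < g ω := by
    have hnn : (0 : L0 μ) ≤ nrm w := hRN.nrm_nonneg w
    filter_upwards [measure_eq_zero_iff_ae_notMem.1 hμN, AEEqFun.coeFn_le.2 hnn,
      AEEqFun.coeFn_zero (β := ℝ) (μ := μ), hgw] with ω hN hle h0 hg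
    intro hωG
    have hne : g ω ≠ 0 := fun hz => hN ⟨hz, hωG⟩
    have h0' : (⇑(0 : L0 μ) : Ω → ℝ) ω = 0 := by rw [h0, Pi.zero_apply]
    have hge : 0 ≤ g ω := by rw [← hg, ← h0']; exact hle
    exact lt_of_le_of_ne hge (Ne.symm hne)
  set ζ : L0 μ := AEEqFun.mk (G.indicator fun ω => (g ω)⁻¹)
    ((hgm.inv.indicator hGm).aestronglyMeasurable) with hζdef
  have hζcoe : ⇑ζ =ᵐ[μ] G.indicator (fun ω => (g ω)⁻¹) := by
    rw [hζdef]; exact AEEqFun.coeFn_mk _ _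
  refine ⟨sm ζ w, ?_, ?_⟩
  · rw [hRN.nrm_smul]
    apply AEEqFun.ext
    filter_upwards [AEEqFun.coeFn_mul |ζ| (nrm w), AEEqFun.coeFn_abs ζ,
      hζcoe, hgw, hgpos,
      ind_coeFn hGm] with ω e1 e2 e3 e4 e5 e6
    rw [e1, Pi.mul_apply, e2, e3, e4, e6]
    by_cases hωG : ω ∈ G
    · have hgω : 0 < g ω := e5 hωG
      rw [Set.indicator_of_mem hωG, Set.indicator_of_mem hωG,
        abs_of_nonneg (inv_nonneg.2 hgω.le), inv_mul_cancel₀ hgω.ne']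
    · rw [Set.indicator_of_notMem hωG, Set.indicator_of_notMem hωG, abs_zero, zero_mul]
  · intro ξ η h
    have hmm : sm (η * ind μ G) (sm ζ w) = sm ((η * ζ) * ind μ G) w := by
      rw [← hRN.mul_smul, mul_right_comm]
    rw [hmm] at h
    obtain ⟨hξ, hηζ⟩ := hw ξ (η * ζ) h
    refine ⟨hξ, ?_⟩
    apply AEEqFun.ext
    have hae : ⇑((η * ζ) * ind μ G) =ᵐ[μ] 0 := by rw [hηζ]; exact AEEqFun.coeFn_zero
    filter_upwards [hae, AEEqFun.coeFn_mul (η * ζ) (ind μ G), AEEqFun.coeFn_mul η ζ,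
      AEEqFun.coeFn_mul η (ind μ G),
      hζcoe, hgpos,
      ind_coeFn hGm, AEEqFun.coeFn_zero (β := ℝ) (μ := μ)] with ω e0 e1 e2 e3 e4 e5 e6 e7
    rw [e3, Pi.mul_apply, e6, e7]
    rw [e1, Pi.mul_apply, e2, Pi.mul_apply, e4, e6] at e0
    by_cases hωG : ω ∈ G
    · have hgω : 0 < g ω := e5 hωG
      rw [Set.indicator_of_mem hωG, Set.indicator_of_mem hωG, mul_one] at e0
      rw [Set.indicator_of_mem hωG, mul_one]
      have : η ω * (g ω)⁻¹ = 0 := e0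
      rcases mul_eq_zero.1 this with h' | h'
      · exact h'
      · exact absurd h' (inv_ne_zero hgω.ne')
    · rw [Set.indicator_of_notMem hωG, mul_zero, Pi.zero_apply]

end RNM
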